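/- Let A be a real M×N matrix, L = AᵀA, σ > 0, ν > 0, γ = σ²/ν², τ > 0, and Q = (1 − τγ)I − τL. Let (Ω, P) be a probability space and let n : Ω → ℝ^M and d : Ω → ℝ^N be square-integrable random vectors with E[n] = 0, E[d] = 0, E[n nᵀ] = σ² I_M, E[d dᵀ] = ν² I_N, and E[d nᵀ] = 0. Set x̄ = x₀ + d (random true configuration with deterministic prior mean x₀ ∈ ℝ^N), b = A x̄ + n, w = τAᵀb + τγx₀, and define the random sequence x[0] = x₀, x[t+1] = Q x[t] + w. Then for every t ≥ 0 the mean square error H_t = (1/N) E[ ‖x[t] − x̄‖₂² ] satisfies H_t = (1/N) tr( ν² Q^{2t} + τσ² (I − Q^{2t})(I − Q)⁻¹ ). -/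

import Mathlib

open Matrix Finset MeasureTheory

section Aux

open Polynomial

lemma stmt9_key_matrix {n : ℕ} (Q : Matrix (Fin n) (Fin n) ℝ) (ν2 τ γ : ℝ) (t : ℕ) :
    ((γ*ν2*τ) • ((∑ k ∈ range t, Q^k) * ((1-τ*γ) • (1 : Matrix (Fin n) (Fin n) ℝ) - Q) * (∑ k ∈ range t, Q^k))
      + ν2 • (((τ*γ) • (∑ k ∈ range t, Q^k) + Q^t) * ((τ*γ) • (∑ k ∈ range t, Q^k) + Q^t))) * (1-Q)^2
    = ν2 • (Q^(2*t) * (1-Q)^2) + (τ*(γ*ν2)) • ((1 - Q^(2*t)) * (1-Q)) := by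
  set φ := (Polynomial.aeval Q : ℝ[X] →ₐ[ℝ] Matrix (Fin n) (Fin n) ℝ) with hφ
  have esmul : ∀ (r : ℝ) (p : ℝ[X]), r • φ p = φ (C r * p) := fun r p => by
    rw [_root_.map_mul, aeval_C, ← Algebra.smul_def]
  have e1 : (∑ k ∈ range t, Q ^ k) = φ (∑ k ∈ range t, (X:ℝ[X]) ^ k) := by simp [hφ]
  have e2 : ((1 - τ*γ) • (1 : Matrix (Fin n) (Fin n) ℝ) - Q) = φ (C (1-τ*γ) - X) := by
    simp only [hφ, map_sub, aeval_C, aeval_X, Algebra.algebraMap_eq_smul_one, sub_smul, one_smul]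
  have e4 : Q ^ (2*t) = φ (X^(2*t)) := by simp [hφ]
  have e3 : Q ^ t = φ (X^t) := by simp [hφ]
  have e0 : Q = φ X := by simp [hφ]
  rw [e1, e2, e4, e3]
  conv_lhs => rw [e0]
  conv_rhs => rw [e0]
  simp only [← _root_.map_one φ, ← map_sub, ← _root_.map_mul, ← map_add, ← map_pow, esmul]
  refine congrArg φ ?_
  have h : (∑ k ∈ range t, (X:ℝ[X]) ^ k) * (1 - X) = 1 - X ^ t := by
    linear_combination -geom_sum_mul (X:ℝ[X]) t
  rw [two_mul, pow_add]
  set s := ∑ k ∈ range t, (X:ℝ[X]) ^ k with hs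
  simp only [C_mul, C_sub, C_1]
  linear_combination (C γ*C ν2*C τ*((1-C τ*C γ)-X)*(s*(1-X) + 1 - X^t)
    + C ν2*C τ*C γ*(C τ*C γ*(s*(1-X)+1-X^t) + 2*X^t*(1-X))) * h

lemma stmt9_mul_integrable {Ω : Type*} [MeasurableSpace Ω] {P : Measure Ω}
    {f g : Ω → ℝ} (hf : MemLp f 2 P) (hg : MemLp g 2 P) :
    Integrable (fun ω => f ω * g ω) P := by
  have h := ((hf.add hg).integrable_sq.sub hf.integrable_sq).sub hg.integrable_sq
  refine (h.const_mul 2⁻¹).congr (Filter.Eventually.of_forall fun ω => ?_)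
  simp only [Pi.sub_apply, Pi.add_apply]
  ring

lemma stmt9_integral_sq_lincomb {Ω : Type*} [MeasurableSpace Ω] {P : Measure Ω}
    {κ : Type*} [Fintype κ] (g : κ → Ω → ℝ) (hg : ∀ k, MemLp (g k) 2 P) (c : κ → ℝ) :
    ∫ ω, (∑ k, c k * g k ω)^2 ∂P = ∑ k, ∑ l, (c k * c l) * ∫ ω, g k ω * g l ω ∂P := by
  have hmul : ∀ k l : κ, Integrable (fun ω => g k ω * g l ω) P :=
    fun k l => stmt9_mul_integrable (hg k) (hg l)
  have h1 : ∀ ω, (∑ k, c k * g k ω)^2 = ∑ k, ∑ l, (c k * c l) * (g k ω * g l ω) := by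
    intro ω; rw [sq, Finset.sum_mul_sum]
    exact Finset.sum_congr rfl fun k _ => Finset.sum_congr rfl fun l _ => by ring
  simp only [h1]
  rw [integral_finset_sum _ fun k _ => integrable_finset_sum _ fun l _ => ((hmul k l).const_mul _)]
  refine Finset.sum_congr rfl fun k _ => ?_
  rw [integral_finset_sum _ fun l _ => ((hmul k l).const_mul _)]
  exact Finset.sum_congr rfl fun l _ => integral_const_mul _ _

lemma stmt9_trace_mul_transpose {m n : ℕ} (M : Matrix (Fin m) (Fin n) ℝ) :
    Matrix.trace (M * Mᵀ) = ∑ i, ∑ j, M i j ^ 2 := by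
  simp [Matrix.trace, Matrix.mul_apply, Matrix.diag, sq]

end Aux

set_option maxHeartbeats 1600000 in
/-- With random true configuration `x̄ = x₀ + d` and measurements
`b = A x̄ + n`, where `E[n] = 0`, `E[d] = 0`, `E[n nᵀ] = σ² I`, `E[d dᵀ] = ν² I`,
`E[d nᵀ] = 0`, the mean square error of the iteration `x[0] = x₀`,
`x[t+1] = Q x[t] + w` (with `w = τAᵀb + τγx₀`, `Q = (1 − τγ)I − τL`, `γ = σ²/ν²`)
satisfies `H_t = (1/N) tr( ν² Q^{2t} + τσ² (I − Q^{2t})(I − Q)⁻¹ )`. -/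
theorem stmt_9 {M N : ℕ} (A : Matrix (Fin M) (Fin N) ℝ)
    (L : Matrix (Fin N) (Fin N) ℝ) (hL : L = Aᵀ * A)
    (σ ν γ τ : ℝ) (hσ : 0 < σ) (hν : 0 < ν) (hγ : γ = σ ^ 2 / ν ^ 2) (hτ : 0 < τ)
    (Q : Matrix (Fin N) (Fin N) ℝ)
    (hQ : Q = (1 - τ * γ) • (1 : Matrix (Fin N) (Fin N) ℝ) - τ • L)
    (Ω : Type*) [MeasurableSpace Ω] (P : Measure Ω) [IsProbabilityMeasure P]
    (noise : Ω → Fin M → ℝ) (d : Ω → Fin N → ℝ)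
    (hn2 : ∀ e, MemLp (fun ω => noise ω e) 2 P)
    (hd2 : ∀ i, MemLp (fun ω => d ω i) 2 P)
    (hnmean : ∀ e, ∫ ω, noise ω e ∂P = 0)
    (hdmean : ∀ i, ∫ ω, d ω i ∂P = 0)
    (hncov : ∀ e f, ∫ ω, noise ω e * noise ω f ∂P = if e = f then σ ^ 2 else 0)
    (hdcov : ∀ i j, ∫ ω, d ω i * d ω j ∂P = if i = j then ν ^ 2 else 0)
    (hdn : ∀ i e, ∫ ω, d ω i * noise ω e ∂P = 0)
    (x₀ : Fin N → ℝ)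
    (xbar : Ω → Fin N → ℝ) (hxbar : ∀ ω, xbar ω = x₀ + d ω)
    (b : Ω → Fin M → ℝ) (hb : ∀ ω, b ω = A.mulVec (xbar ω) + noise ω)
    (w : Ω → Fin N → ℝ) (hw : ∀ ω, w ω = τ • Aᵀ.mulVec (b ω) + (τ * γ) • x₀)
    (x : ℕ → Ω → Fin N → ℝ) (hx0 : ∀ ω, x 0 ω = x₀)
    (hx : ∀ t ω, x (t + 1) ω = Q.mulVec (x t ω) + w ω) :
    ∀ t : ℕ, (1 / (N : ℝ)) * ∫ ω, ∑ i, (x t ω i - xbar ω i) ^ 2 ∂P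
      = (1 / (N : ℝ)) * Matrix.trace
          (ν ^ 2 • Q ^ (2 * t) + (τ * σ ^ 2) • ((1 - Q ^ (2 * t)) * (1 - Q)⁻¹)) := by
  have hν2 : (ν:ℝ)^2 ≠ 0 := pow_ne_zero 2 hν.ne'
  have hσγ : σ^2 = γ * ν^2 := by rw [hγ]; field_simp
  have hQsymm : Qᵀ = Q := by
    rw [hQ, transpose_sub, transpose_smul, transpose_one, transpose_smul, hL,
      transpose_mul, transpose_transpose]
  have hIQ : (1 : Matrix (Fin N) (Fin N) ℝ) - Q = τ • L + (τ*γ) • 1 := by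
    rw [hQ]; module
  have hdet : IsUnit (1 - Q).det := by
    rw [hIQ]
    have hLpsd : (τ • L).PosSemidef := by
      have h := Matrix.posSemidef_conjTranspose_mul_self ((Real.sqrt τ) • A)
      have e : ((Real.sqrt τ) • A)ᴴ * ((Real.sqrt τ) • A) = τ • L := by
        rw [hL, ← Matrix.conjTranspose_eq_transpose_of_trivial,
          Matrix.conjTranspose_smul, star_trivial, Matrix.smul_mul, Matrix.mul_smul,
          smul_smul, Real.mul_self_sqrt hτ.le]
      rwa [e] at h
    have hone : ((τ*γ) • (1 : Matrix (Fin N) (Fin N) ℝ)).PosDef := by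
      rw [Matrix.smul_one_eq_diagonal]
      refine Matrix.posDef_diagonal_iff.mpr fun i => ?_
      have hγpos : 0 < γ := by rw [hγ]; positivity
      positivity
    exact (Matrix.PosDef.posSemidef_add hLpsd hone).det_pos.ne'.isUnit
  set u : Ω → Fin N → ℝ := fun ω => τ • Aᵀ.mulVec (noise ω) - (τ*γ) • d ω with hu
  have hstep : ∀ ω, Q.mulVec (xbar ω) + w ω - xbar ω = u ω := by
    intro ω
    rw [hw, hb, hQ, Matrix.sub_mulVec, Matrix.smul_mulVec, Matrix.smul_mulVec,
      Matrix.one_mulVec, Matrix.mulVec_add, smul_add, Matrix.mulVec_mulVec, ← hL,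
      hxbar, hu]
    module
  have hclosed : ∀ t ω, x t ω - xbar ω
      = (∑ k ∈ range t, Q^k).mulVec (u ω) - (Q^t).mulVec (d ω) := by
    intro t
    induction t with
    | zero =>
      intro ω
      rw [hx0, hxbar]
      simp only [range_zero, Finset.sum_empty, Matrix.zero_mulVec, pow_zero, Matrix.one_mulVec]
      abel
    | succ t ih =>
      intro ω
      have h1 : x (t+1) ω - xbar ω = Q.mulVec (x t ω - xbar ω) + u ω := by
        rw [hx, Matrix.mulVec_sub, ← hstep ω]; abel
      rw [h1, ih ω, Matrix.mulVec_sub, Matrix.mulVec_mulVec, Matrix.mulVec_mulVec,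
        geom_sum_succ, Matrix.add_mulVec, Matrix.one_mulVec, ← pow_succ']
      abel
  intro t
  congr 1
  set S : Matrix (Fin N) (Fin N) ℝ := ∑ k ∈ range t, Q^k with hS
  have hSsymm : Sᵀ = S := by
    rw [hS, Matrix.transpose_sum]
    exact Finset.sum_congr rfl fun k _ => by rw [Matrix.transpose_pow, hQsymm]
  set F : Matrix (Fin N) (Fin N) ℝ := (τ*γ) • S + Q^t with hF
  have hFsymm : Fᵀ = F := by
    rw [hF, Matrix.transpose_add, Matrix.transpose_smul, hSsymm, Matrix.transpose_pow, hQsymm]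
  set B : Matrix (Fin N) (Fin M) ℝ := τ • (S * Aᵀ) with hB
  have hBF : ∀ ω, x t ω - xbar ω = B.mulVec (noise ω) - F.mulVec (d ω) := by
    intro ω
    rw [hclosed t ω]
    simp only [hu, hB, hF]
    rw [Matrix.mulVec_sub, Matrix.mulVec_smul, Matrix.mulVec_smul, Matrix.mulVec_mulVec,
      Matrix.smul_mulVec, Matrix.add_mulVec, Matrix.smul_mulVec]
    abel
  have hpoint : ∀ ω i, x t ω i - xbar ω i = ∑ e, B i e * noise ω e - ∑ j, F i j * d ω j := by
    intro ω i
    have h := congrFun (hBF ω) i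
    simpa [Matrix.mulVec, dotProduct] using h
  set g : (Fin M ⊕ Fin N) → Ω → ℝ := Sum.elim (fun e ω => noise ω e) (fun j ω => d ω j) with hg
  set c : Fin N → (Fin M ⊕ Fin N) → ℝ :=
    fun i => Sum.elim (fun e => B i e) (fun j => -(F i j)) with hc
  have hg2 : ∀ k, MemLp (g k) 2 P := by
    rintro (e|j)
    · exact hn2 e
    · exact hd2 j
  have hsum : ∀ ω i, x t ω i - xbar ω i = ∑ k, c i k * g k ω := by
    intro ω i
    rw [hpoint ω i, Fintype.sum_sum_type]
    simp [hc, hg, sub_eq_add_neg, neg_mul, Finset.sum_neg_distrib]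
  have hnd : ∀ e j, ∫ ω, noise ω e * d ω j ∂P = 0 := by
    intro e j
    have h : (fun ω => noise ω e * d ω j) = fun ω => d ω j * noise ω e := by
      funext ω; ring
    rw [h, hdn]
  have hInt : ∫ ω, ∑ i, (x t ω i - xbar ω i)^2 ∂P
      = ∑ i, (σ^2 * ∑ e, B i e ^2 + ν^2 * ∑ j, F i j ^2) := by
    have hrw : (fun ω => ∑ i, (x t ω i - xbar ω i)^2)
        = fun ω => ∑ i, (∑ k, c i k * g k ω)^2 := by
      funext ω; exact Finset.sum_congr rfl fun i _ => by rw [hsum ω i]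
    have hIntSq : ∀ i : Fin N, Integrable (fun ω => (∑ k, c i k * g k ω)^2) P := by
      intro i
      have h := (memLp_finset_sum' (μ := P) univ
        (f := fun k ω => c i k * g k ω) (fun k _ => ((hg2 k).const_mul (c i k)))).integrable_sq
      simpa using h
    rw [hrw, integral_finset_sum (f := fun i ω => (∑ k, c i k * g k ω)^2) univ
      fun i _ => hIntSq i]
    refine Finset.sum_congr rfl fun i _ => ?_
    rw [stmt9_integral_sq_lincomb g hg2 (c i)]
    simp only [Fintype.sum_sum_type, hc, hg, Sum.elim_inl, Sum.elim_inr,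
      hncov, hdcov, hdn, hnd, mul_ite, mul_zero, Finset.sum_ite_eq, Finset.mem_univ,
      if_true, Finset.sum_const_zero, add_zero, zero_add]
    rw [Finset.mul_sum, Finset.mul_sum]
    congr 1
    · exact Finset.sum_congr rfl fun e _ => by ring
    · exact Finset.sum_congr rfl fun j _ => by ring
  have hmatkey : (γ*ν^2*τ) • (S * ((1-τ*γ) • (1 : Matrix (Fin N) (Fin N) ℝ) - Q) * S)
        + ν^2 • (F*F)
      = ν^2 • Q^(2*t) + (τ*σ^2) • ((1 - Q^(2*t)) * (1-Q)⁻¹) := by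
    have hkm := stmt9_key_matrix Q (ν^2) τ γ t
    rw [← hS, ← hF] at hkm
    letI := (1-Q).invertibleOfIsUnitDet hdet
    letI : Invertible ((1-Q)^2) := invertiblePow _ 2
    refine Matrix.mul_left_injective_of_invertible ((1-Q)^2) ?_
    dsimp only
    rw [hkm, add_mul, smul_mul_assoc, smul_mul_assoc, hσγ]
    congr 1
    rw [pow_two (1-Q), Matrix.mul_assoc, ← Matrix.mul_assoc (1-Q)⁻¹, Matrix.nonsing_inv_mul _ hdet,
      Matrix.one_mul]
  have hBBt : (γ*ν^2*τ) • (S * ((1-τ*γ) • (1 : Matrix (Fin N) (Fin N) ℝ) - Q) * S)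
      = σ^2 • (B * Bᵀ) := by
    have h2 : (1-τ*γ) • (1 : Matrix (Fin N) (Fin N) ℝ) - Q = τ • L := by rw [hQ]; module
    rw [h2, hB, Matrix.transpose_smul, Matrix.transpose_mul, Matrix.transpose_transpose,
      hSsymm, hL, hσγ]
    simp only [Matrix.smul_mul, Matrix.mul_smul, smul_smul, Matrix.mul_assoc]
    module
  have htrace : ∑ i, (σ^2 * ∑ e, B i e ^2 + ν^2 * ∑ j, F i j ^2)
      = Matrix.trace ((γ*ν^2*τ) • (S * ((1-τ*γ) • (1 : Matrix (Fin N) (Fin N) ℝ) - Q) * S)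
          + ν^2 • (F*F)) := by
    rw [Matrix.trace_add, hBBt, Matrix.trace_smul, Matrix.trace_smul]
    have hFt : F * F = F * Fᵀ := by rw [hFsymm]
    rw [hFt, stmt9_trace_mul_transpose, stmt9_trace_mul_transpose]
    rw [Finset.sum_add_distrib, ← Finset.mul_sum, ← Finset.mul_sum]
    simp [smul_eq_mul]
  rw [hInt, htrace, hmatkey]
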